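/- Let E : 𝓗 → ℝ be C² and let P* ∈ 𝓜_N be a nondegenerate local minimizer of E over 𝓜_N with constant η > 0, i.e. E(P) ≥ E(P*) + η‖P−P*‖_F² for all P ∈ 𝓜_N close enough to P*. Then the operator Ω* + K* : T_{P*}𝓜_N → T_{P*}𝓜_N satisfies the second-order optimality condition ⟨X, (Ω* + K*)X⟩ ≥ η‖X‖_F² for all X ∈ T_{P*}𝓜_N. -/

import Mathlib

open Matrix Filter Topology
open scoped BigOperators

attribute [local instance] Matrix.normedAddCommGroup Matrix.normedSpace

noncomputable section

/-- Square real matrices of size `n`. -/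
abbrev Mat (n : ℕ) := Matrix (Fin n) (Fin n) ℝ

/-- Frobenius inner product `⟨A, B⟩ = Tr(AᵀB)`. -/
def frobInner {n : ℕ} (A B : Mat n) : ℝ := (Aᵀ * B).trace

/-- Frobenius norm. -/
def frobNorm {n : ℕ} (A : Mat n) : ℝ := Real.sqrt ((Aᵀ * A).trace)

/-- The manifold `𝓜_N` of rank-`N` symmetric orthogonal projectors. -/
def projSet (n N : ℕ) : Set (Mat n) := {P | P.IsSymm ∧ P * P = P ∧ P.trace = (N : ℝ)}

/-- The tangent space `T_P 𝓜_N`. -/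
def tangentSet {n : ℕ} (P : Mat n) : Set (Mat n) :=
  {X | X.IsSymm ∧ P * X + X * P = X ∧ X.trace = 0}

/-- The projection `Π_P(X) = P X (1 − P) + (1 − P) X P` onto the tangent space. -/
def piT {n : ℕ} (P X : Mat n) : Mat n := P * X * (1 - P) + (1 - P) * X * P

/-- The operator `Ω_* X = −[P, [H, X]]`. -/
def OmegaOp {n : ℕ} (P H X : Mat n) : Mat n :=
  -(P * (H * X - X * H) - (H * X - X * H) * P)



section linfty
attribute [local instance 2000] Matrix.linftyOpNormedAddCommGroup Matrix.linftyOpNormedRing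
  Matrix.linftyOpNormedSpace Matrix.linftyOpNormedAlgebra
set_option synthInstance.maxHeartbeats 1000000
lemma exp_slope' {n : ℕ} (A : Mat n) (t : ℝ) :
    Tendsto (slope (fun s : ℝ => NormedSpace.exp (s • A)) t) (𝓝[≠] t)
      (𝓝 (A * NormedSpace.exp (t • A))) :=
  hasDerivAt_iff_tendsto_slope.mp (hasDerivAt_exp_smul_const' A t)
end linfty

lemma hasDerivAt_expCurve {n : ℕ} (A : Mat n) (t : ℝ) :
    HasDerivAt (fun s : ℝ => NormedSpace.exp (s • A)) (A * NormedSpace.exp (t • A)) t :=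
  hasDerivAt_iff_tendsto_slope.mpr (exp_slope' A t)

def mulCLM (n : ℕ) : Mat n →L[ℝ] Mat n →L[ℝ] Mat n :=
  LinearMap.toContinuousLinearMap
    ((LinearMap.toContinuousLinearMap :
        (Mat n →ₗ[ℝ] Mat n) ≃ₗ[ℝ] (Mat n →L[ℝ] Mat n)).toLinearMap.comp
      (LinearMap.mul ℝ (Mat n)))

lemma mulCLM_apply {n : ℕ} (A B : Mat n) : mulCLM n A B = A * B := rfl

instance matCLMNormedAddCommGroup (n : ℕ) : NormedAddCommGroup (Mat n →L[ℝ] Mat n) :=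
  ContinuousLinearMap.toNormedAddCommGroup

instance matCLMNormedSpace (n : ℕ) : NormedSpace ℝ (Mat n →L[ℝ] Mat n) :=
  ContinuousLinearMap.toNormedSpace

instance matCLMRNormedAddCommGroup (n : ℕ) : NormedAddCommGroup (Mat n →L[ℝ] ℝ) :=
  ContinuousLinearMap.toNormedAddCommGroup

instance matCLMRNormedSpace (n : ℕ) : NormedSpace ℝ (Mat n →L[ℝ] ℝ) :=
  ContinuousLinearMap.toNormedSpace

lemma HasDerivAt.matmul {n : ℕ} {a b : ℝ → Mat n} {a' b' : Mat n} {t : ℝ}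
    (ha : HasDerivAt a a' t) (hb : HasDerivAt b b' t) :
    HasDerivAt (fun s => a s * b s) (a' * b t + a t * b') t := by
  have h1 : HasDerivAt (fun s => mulCLM n (a s)) (mulCLM n a') t :=
    (mulCLM n).hasFDerivAt.comp_hasDerivAt t ha
  exact h1.clm_apply hb

def traceCLM (n : ℕ) : Mat n →L[ℝ] ℝ :=
  LinearMap.toContinuousLinearMap (Matrix.traceLinearMap (Fin n) ℝ ℝ)

lemma HasDerivAt.mtrace {n : ℕ} {a : ℝ → Mat n} {a' : Mat n} {t : ℝ}
    (ha : HasDerivAt a a' t) :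
    HasDerivAt (fun s => (a s).trace) a'.trace t :=
  (traceCLM n).hasFDerivAt.comp_hasDerivAt t ha

def transCLM (n : ℕ) : Mat n →L[ℝ] Mat n :=
  LinearMap.toContinuousLinearMap (Matrix.transposeLinearEquiv (Fin n) (Fin n) ℝ ℝ).toLinearMap

lemma HasDerivAt.mtranspose {n : ℕ} {a : ℝ → Mat n} {a' : Mat n} {t : ℝ}
    (ha : HasDerivAt a a' t) :
    HasDerivAt (fun s => (a s)ᵀ) a'ᵀ t :=
  (transCLM n).hasFDerivAt.comp_hasDerivAt t ha

lemma trace_transpose_mul_self_nonneg {n : ℕ} (M : Mat n) : 0 ≤ (Mᵀ * M).trace := by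
  rw [Matrix.trace]
  refine Finset.sum_nonneg fun j _ => ?_
  simp only [Matrix.diag_apply, Matrix.mul_apply, Matrix.transpose_apply]
  exact Finset.sum_nonneg fun i _ => mul_self_nonneg _

lemma second_deriv_nonneg_of_localmin {f g : ℝ → ℝ} {s : ℝ}
    (hf : ∀ t, HasDerivAt f (g t) t) (hg : HasDerivAt g s 0)
    (hmin : ∀ᶠ t in 𝓝 (0:ℝ), f 0 ≤ f t) : 0 ≤ s := by
  have hg0 : g 0 = 0 := IsLocalMin.hasDerivAt_eq_zero hmin (hf 0)
  by_contra hs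
  push_neg at hs
  have hslope : Tendsto (slope g 0) (𝓝[≠] 0) (𝓝 s) := hasDerivAt_iff_tendsto_slope.mp hg
  have hev : ∀ᶠ t in 𝓝[≠] (0:ℝ), slope g 0 t < s / 2 :=
    hslope.eventually (gt_mem_nhds (by linarith))
  obtain ⟨u, hu, hu0, husub⟩ := mem_nhdsWithin.mp hev
  obtain ⟨δ1, hδ1, hball1⟩ := Metric.isOpen_iff.mp hu 0 hu0
  obtain ⟨δ2, hδ2, hball2⟩ := Metric.eventually_nhds_iff.mp hmin
  set t := min δ1 δ2 / 2 with ht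
  have htpos : 0 < t := by positivity
  have hcont : ContinuousOn f (Set.Icc 0 t) := fun x _ => ((hf x).continuousAt).continuousWithinAt
  obtain ⟨ξ, hξ, hξeq⟩ := exists_hasDerivAt_eq_slope f g htpos hcont fun x _ => hf x
  have hξpos : 0 < ξ := hξ.1
  have hξlt : ξ < δ1 :=
    lt_of_lt_of_le (lt_of_lt_of_le hξ.2 (by simp [ht]; linarith [min_le_left δ1 δ2])) le_rfl
  have hslopeξ : slope g 0 ξ < s / 2 :=
    husub ⟨hball1 (by simp [Real.dist_eq, abs_of_pos hξpos]; linarith), ne_of_gt hξpos⟩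
  rw [slope_def_field] at hslopeξ
  simp only [hg0, sub_zero] at hslopeξ
  have hgξ : g ξ < 0 := by
    have h1 : g ξ / ξ < s / 2 := hslopeξ
    nlinarith [(div_lt_iff₀ hξpos).mp h1]
  have hft : f t < f 0 := by
    have h1 : g ξ = (f t - f 0) / (t - 0) := hξeq
    have h2 : (f t - f 0) / t < 0 := by rw [sub_zero] at h1; rw [h1] at hgξ; exact hgξ
    have h3 := (div_lt_iff₀ htpos).mp h2
    linarith
  have : f 0 ≤ f t :=
    hball2 (by simp [Real.dist_eq, abs_of_pos htpos]; linarith [min_le_right δ1 δ2])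
  linarith

/- ## curve -/

section curve
variable {n : ℕ}

def wCurve (A : Mat n) (t : ℝ) : Mat n := NormedSpace.exp (t • A)
def cCurve (A P : Mat n) (t : ℝ) : Mat n := wCurve A t * P * (wCurve A t)ᵀ

lemma wCurve_transpose {A : Mat n} (hA : Aᵀ = -A) (t : ℝ) :
    (wCurve A t)ᵀ = wCurve A (-t) := by
  rw [wCurve, wCurve, ← Matrix.exp_transpose, Matrix.transpose_smul, hA, smul_neg, neg_smul]

lemma wCurve_mul_neg (A : Mat n) (t : ℝ) : wCurve A t * wCurve A (-t) = 1 := by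
  rw [wCurve, wCurve, ← Matrix.exp_add_of_commute _ _
      (((Commute.refl A).smul_left t).smul_right (-t))]
  simp [NormedSpace.exp_zero]

lemma hasDerivAt_wCurve (A : Mat n) (t : ℝ) :
    HasDerivAt (wCurve A) (A * wCurve A t) t := hasDerivAt_expCurve A t

lemma hasDerivAt_cCurve {A P : Mat n} (hA : Aᵀ = -A) (t : ℝ) :
    HasDerivAt (cCurve A P) (A * cCurve A P t - cCurve A P t * A) t := by
  have h1 : HasDerivAt (fun s => wCurve A s * P) (A * wCurve A t * P) t := by
    simpa using (hasDerivAt_wCurve A t).matmul (hasDerivAt_const t P)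
  have h2 := h1.matmul ((hasDerivAt_wCurve A t).mtranspose)
  have he : A * wCurve A t * P * (wCurve A t)ᵀ + wCurve A t * P * (A * wCurve A t)ᵀ
      = A * cCurve A P t - cCurve A P t * A := by
    rw [Matrix.transpose_mul, hA, cCurve]
    simp only [Matrix.mul_assoc, Matrix.mul_neg, Matrix.neg_mul]
    abel
  rw [← he]
  exact h2

lemma cCurve_zero (A P : Mat n) : cCurve A P 0 = P := by
  simp [cCurve, wCurve, NormedSpace.exp_zero]

lemma cCurve_symm {A P : Mat n} (hP : Pᵀ = P) (t : ℝ) : (cCurve A P t)ᵀ = cCurve A P t := by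
  rw [cCurve, Matrix.transpose_mul, Matrix.transpose_mul, Matrix.transpose_transpose, hP,
    Matrix.mul_assoc]

lemma wCurveT_mul {A : Mat n} (hA : Aᵀ = -A) (t : ℝ) :
    (wCurve A t)ᵀ * wCurve A t = 1 := by
  rw [wCurve_transpose hA]
  have := wCurve_mul_neg A (-t); rwa [neg_neg] at this

lemma cCurve_idem {A P : Mat n} (hA : Aᵀ = -A) (hP : P * P = P) (t : ℝ) :
    cCurve A P t * cCurve A P t = cCurve A P t := by
  have hw := wCurveT_mul hA t
  calc cCurve A P t * cCurve A P t
      = wCurve A t * P * ((wCurve A t)ᵀ * wCurve A t) * P * (wCurve A t)ᵀ := by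
        rw [cCurve]; simp only [Matrix.mul_assoc]
    _ = cCurve A P t := by
        rw [hw, Matrix.mul_one, cCurve]
        have h3 : wCurve A t * P * P = wCurve A t * P := by
          rw [Matrix.mul_assoc, hP]
        rw [h3]

lemma cCurve_trace {A P : Mat n} (hA : Aᵀ = -A) (t : ℝ) :
    (cCurve A P t).trace = P.trace := by
  rw [cCurve, Matrix.trace_mul_cycle, wCurveT_mul hA, Matrix.one_mul]
end curve

/- ## trace rotation helpers -/

lemma tr_rot4 {n : ℕ} (A B C D : Mat n) : (A*B*C*D).trace = (D*A*B*C).trace := by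
  rw [Matrix.trace_mul_comm (A*B*C) D, ← Matrix.mul_assoc, ← Matrix.mul_assoc]


/-- second-order optimality condition. If `P*` is a nondegenerate local
minimizer of a `C²` energy `E` over `𝓜_N` with constant `η > 0`, then for every
tangent vector `X`, `⟨X, (Ω* + K*)X⟩ ≥ η‖X‖_F²`, where `Ω* X = −[P*,[H*,X]]` and
`K* = Π_{P*} ∘ ∇²E(P*) ∘ Π_{P*}`. -/
theorem second_order_optimality {Nb N : ℕ} (E : Mat Nb → ℝ) (hE : ContDiff ℝ 2 E)
    (Pstar Hstar : Mat Nb)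
    (hPmem : Pstar ∈ projSet Nb N) (hHsym : Hstar.IsSymm)
    (hgrad : ∀ X : Mat Nb, X.IsSymm → fderiv ℝ E Pstar X = (Hstar * X).trace)
    (hess : Mat Nb →ₗ[ℝ] Mat Nb)
    (hesssym : ∀ X : Mat Nb, X.IsSymm → (hess X).IsSymm)
    (hhess : ∀ X Y : Mat Nb, X.IsSymm → Y.IsSymm →
      iteratedFDeriv ℝ 2 E Pstar ![X, Y] = frobInner (hess X) Y)
    (η : ℝ) (hη : 0 < η)
    (hmin : ∃ ε > 0, ∀ P ∈ projSet Nb N, frobNorm (P - Pstar) < ε →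
      E Pstar + η * frobNorm (P - Pstar) ^ 2 ≤ E P) :
    ∀ X ∈ tangentSet Pstar,
      η * frobNorm X ^ 2 ≤
        frobInner X (OmegaOp Pstar Hstar X + piT Pstar (hess (piT Pstar X))) := by
  intro X hX
  obtain ⟨hXs, hXt, _⟩ := hX
  obtain ⟨hPs, hPP, hPtr⟩ := hPmem
  set P := Pstar with hPdef
  set H := Hstar with hHdef
  -- basic algebra
  have hPXP : P * X * P = 0 := by
    have h1 : P * (P * X + X * P) = P * X := by rw [hXt]
    rw [Matrix.mul_add, ← Matrix.mul_assoc, ← Matrix.mul_assoc, hPP] at h1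
    exact add_eq_left.mp h1
  set A := X * P - P * X with hAdef
  have hA : Aᵀ = -A := by
    rw [hAdef, Matrix.transpose_sub, Matrix.transpose_mul, Matrix.transpose_mul, hPs, hXs]
    abel
  have hv0 : A * P - P * A = X := by
    have e1 : (X * P - P * X) * P - P * (X * P - P * X)
        = X * (P * P) - P * X * P - P * X * P + P * P * X := by noncomm_ring
    rw [hAdef, e1, hPP, hPXP]
    calc X * P - 0 - 0 + P * X = P * X + X * P := by abel
      _ = X := hXt
  set W := A * X - X * A with hWdef
  have hWs : W.IsSymm := by
    show Wᵀ = W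
    rw [hWdef, Matrix.transpose_sub, Matrix.transpose_mul, Matrix.transpose_mul, hA, hXs]
    simp only [Matrix.mul_neg, Matrix.neg_mul]
    abel
  -- curve and derivatives
  set c := cCurve A P with hcdef
  have hc : ∀ t, HasDerivAt c (A * c t - c t * A) t := fun t => hasDerivAt_cCurve hA t
  have hc0 : c 0 = P := cCurve_zero A P
  have hv : ∀ t, HasDerivAt (fun s => A * c s - c s * A)
      (A * (A * c t - c t * A) - (A * c t - c t * A) * A) t := by
    intro t
    have h1 := ((hasDerivAt_const t A).matmul (hc t)).sub ((hc t).matmul (hasDerivAt_const t A))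
    exact h1.congr_deriv (by simp)
  have hv0' : A * c 0 - c 0 * A = X := by rw [hc0]; exact hv0
  -- E derivatives
  have hEdiff : Differentiable ℝ E := hE.differentiable two_ne_zero
  have hf : ∀ t, HasDerivAt (fun s => E (c s)) (fderiv ℝ E (c t) (A * c t - c t * A)) t :=
    fun t => (hEdiff (c t)).hasFDerivAt.comp_hasDerivAt t (hc t)
  have hE1 : ContDiff ℝ 1 (fderiv ℝ E) := by
    have h2 : ContDiff ℝ ((1 : ℕ) + 1) E := by norm_num; exact hE
    exact (contDiff_succ_iff_fderiv.mp h2).2.2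
  have hdF : HasFDerivAt (fderiv ℝ E) (fderiv ℝ (fderiv ℝ E) P) (c 0) := by
    rw [hc0]; exact (hE1.differentiable one_ne_zero P).hasFDerivAt
  have g1 : HasDerivAt (fun t => fderiv ℝ E (c t)) (fderiv ℝ (fderiv ℝ E) P X) 0 := by
    have := hdF.comp_hasDerivAt 0 (hc 0)
    rwa [hv0'] at this
  have hscnd : HasDerivAt (fun t => fderiv ℝ E (c t) (A * c t - c t * A))
      (fderiv ℝ (fderiv ℝ E) P X X + fderiv ℝ E P W) 0 := by
    have := g1.clm_apply (hv 0)
    rwa [hv0', hc0, ← hWdef] at this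
  -- q derivatives
  have hq : ∀ t, HasDerivAt (fun s => ((c s - P) * (c s - P)).trace)
      (((A * c t - c t * A) * (c t - P) + (c t - P) * (A * c t - c t * A)).trace) t :=
    fun t => (((hc t).sub_const P).matmul ((hc t).sub_const P)).mtrace
  have hq2 : HasDerivAt
      (fun t => ((A * c t - c t * A) * (c t - P) + (c t - P) * (A * c t - c t * A)).trace)
      (2 * (X * X).trace) 0 := by
    have h1 := ((hv 0).matmul ((hc 0).sub_const P)).add (((hc 0).sub_const P).matmul (hv 0))
    have h2 := h1.mtrace
    rw [hv0', hc0, sub_self] at h2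
    simpa [two_mul] using h2
  -- local min of φ
  have hminφ : ∀ᶠ t in 𝓝 (0:ℝ),
      (fun t => E (c t) - E P - η * ((c t - P) * (c t - P)).trace) 0
        ≤ (fun t => E (c t) - E P - η * ((c t - P) * (c t - P)).trace) t := by
    obtain ⟨ε, hε, hminP⟩ := hmin
    have hqc : ContinuousAt (fun t => ((c t - P) * (c t - P)).trace) 0 := (hq 0).continuousAt
    have hq0 : ((c 0 - P) * (c 0 - P)).trace = 0 := by rw [hc0]; simp
    have hev : ∀ᶠ t in 𝓝 (0:ℝ), ((c t - P) * (c t - P)).trace < ε ^ 2 := by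
      have := hqc.tendsto
      rw [hq0] at this
      exact this.eventually (gt_mem_nhds (by positivity))
    filter_upwards [hev] with t hqt
    have hctsym : (c t - P)ᵀ = c t - P := by
      rw [Matrix.transpose_sub, cCurve_symm hPs, hPs]
    have hqnn : 0 ≤ ((c t - P) * (c t - P)).trace := by
      have := trace_transpose_mul_self_nonneg (c t - P)
      rwa [hctsym] at this
    have hfn : frobNorm (c t - P) = Real.sqrt (((c t - P) * (c t - P)).trace) := by
      rw [frobNorm, hctsym]
    have hfnlt : frobNorm (c t - P) < ε := by
      rw [hfn, Real.sqrt_lt' hε]; exact hqt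
    have hmem : c t ∈ projSet Nb N :=
      ⟨cCurve_symm hPs t, cCurve_idem hA hPP t, by rw [cCurve_trace hA]; exact hPtr⟩
    have hle := hminP (c t) hmem hfnlt
    have hfq : frobNorm (c t - P) ^ 2 = ((c t - P) * (c t - P)).trace := by
      rw [hfn, Real.sq_sqrt hqnn]
    rw [hfq] at hle
    simp only [hc0, sub_self, Matrix.zero_mul, Matrix.trace_zero, mul_zero]
    linarith
  -- second-order inequality
  have hkey : 0 ≤ (fderiv ℝ (fderiv ℝ E) P X X + fderiv ℝ E P W) - η * (2 * (X * X).trace) := by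
    refine second_deriv_nonneg_of_localmin (f := fun t => E (c t) - E P - η * ((c t - P) * (c t - P)).trace)
      (g := fun t => fderiv ℝ E (c t) (A * c t - c t * A)
        - η * (((A * c t - c t * A) * (c t - P) + (c t - P) * (A * c t - c t * A)).trace))
      (fun t => ((hf t).sub_const (E P)).sub ((hq t).const_mul η))
      (hscnd.sub (hq2.const_mul η)) hminφ
  -- identify the second derivative terms
  have hhXX : fderiv ℝ (fderiv ℝ E) P X X = ((hess X)ᵀ * X).trace := by
    have h1 := iteratedFDeriv_two_apply (𝕜 := ℝ) E P ![X, X]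
    have h2 := hhess X X hXs hXs
    rw [h1] at h2
    simp only [frobInner] at h2
    simp at h2
    exact h2
  have hgW : fderiv ℝ E P W = (H * W).trace := hgrad W hWs
  rw [hhXX, hgW] at hkey
  -- trace algebra
  set Y := hess (piT P X) with hYdef
  have hpiTX : piT P X = X := by
    have e1 : P * X * (1 - P) + (1 - P) * X * P = P * X + X * P - (P * X * P + P * X * P) := by
      noncomm_ring
    rw [piT, e1, hPXP, hXt]
    simp
  have hYX : Y = hess X := by rw [hYdef, hpiTX]
  have hYs : Yᵀ = Y := by rw [hYX]; exact hesssym X hXs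
  -- claim 2 : (X * OmegaOp P H X).trace = (H * W).trace
  have claim2 : (X * OmegaOp P H X).trace = (H * W).trace := by
    have e1 : X * OmegaOp P H X = X*H*X*P - X*X*H*P - X*P*H*X + X*P*X*H := by
      rw [OmegaOp]; noncomm_ring
    have e2 : H * W = H*X*P*X - H*P*X*X - H*X*X*P + H*X*P*X := by
      rw [hWdef, hAdef]; noncomm_ring
    rw [e1, e2]
    simp only [Matrix.trace_sub, Matrix.trace_add]
    rw [show (X*H*X*P).trace = (H*X*P*X).trace by
        rw [tr_rot4 X H X P, tr_rot4 P X H X, tr_rot4 X P X H]]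
    rw [show (X*X*H*P).trace = (H*P*X*X).trace by
        rw [tr_rot4 X X H P, tr_rot4 P X X H]]
    rw [show (X*P*H*X).trace = (H*X*X*P).trace by
        rw [tr_rot4 X P H X, tr_rot4 X X P H]]
    rw [show (X*P*X*H).trace = (H*X*P*X).trace by
        rw [tr_rot4 X P X H]]
  -- claim 1 : (X * piT P Y).trace = (Y * X).trace
  have claim1 : (X * piT P Y).trace = (Y * X).trace := by
    have e1 : X * piT P Y = X*P*Y + X*Y*P - (X*P*Y*P + X*P*Y*P) := by
      rw [piT]; noncomm_ring
    rw [e1]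
    have h0 : (X*P*Y*P).trace = 0 := by
      rw [tr_rot4 X P Y P, show P*X*P*Y = (P*X*P)*Y from rfl, hPXP]
      simp
    rw [Matrix.trace_sub, Matrix.trace_add, Matrix.trace_add, h0]
    have h1 : (X*P*Y).trace = (Y*(X*P)).trace := by
      rw [Matrix.trace_mul_cycle]; rw [Matrix.mul_assoc]
    have h2 : (X*Y*P).trace = (Y*(P*X)).trace := by
      rw [Matrix.trace_mul_cycle, Matrix.trace_mul_cycle]; rw [Matrix.mul_assoc]
    rw [h1, h2]
    rw [← Matrix.trace_add, ← Matrix.mul_add]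
    have h3 : X * P + P * X = X := by rw [add_comm (X * P) (P * X)]; exact hXt
    rw [h3]
    simp
  -- final assembly
  have hXXnn : 0 ≤ (X * X).trace := by
    have := trace_transpose_mul_self_nonneg X
    rwa [hXs] at this
  have hfrobX : frobNorm X ^ 2 = (X * X).trace := by
    rw [frobNorm, hXs, Real.sq_sqrt hXXnn]
  have hrhs : frobInner X (OmegaOp P H X + piT P Y)
      = (H * W).trace + ((hess X)ᵀ * X).trace := by
    rw [frobInner, hXs, Matrix.mul_add, Matrix.trace_add, claim2, claim1, hYX,
      ← Matrix.trace_mul_comm]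
    rw [(hesssym X hXs : (hess X)ᵀ = hess X)]
  rw [hfrobX, hrhs]
  have h2 : η * (2 * (X * X).trace) = 2 * (η * (X * X).trace) := by ring
  rw [h2] at hkey
  linarith [mul_nonneg hη.le hXXnn]
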